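/- arXiv:1307.0769 — 5 statements merged into one kernel-verified Lean document; each statement's English description precedes it below -/
import Mathlib

section
/- Under the stated assumptions, the algebra B is non-degenerate: for x ∈ B, if xB = 0 then x = 0, and if Bx = 0 then x = 0. -/
open scoped TensorProduct

noncomputable section

/-- A multiplier of a non-unital complex algebra `A`: a pair `T = (L, R)` of ℂ-linear maps
`A → A` satisfying `L (a*b) = L a * b`, `R (a*b) = a * R b` and `R a * b = a * L b`.
We write `T a := L a` and `a T := R a`. -/
structure Mult (A : Type*) [NonUnitalRing A] [Module ℂ A]
    [SMulCommClass ℂ A A] [IsScalarTower ℂ A A] where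
  L : A →ₗ[ℂ] A
  R : A →ₗ[ℂ] A
  hL : ∀ a b : A, L (a * b) = L a * b
  hR : ∀ a b : A, R (a * b) = a * R b
  hC : ∀ a b : A, R a * b = a * L b

namespace Mult

variable {A : Type*} [NonUnitalRing A] [Module ℂ A] [SMulCommClass ℂ A A] [IsScalarTower ℂ A A]

/-- Multiplication of multipliers: `(L,R)·(L′,R′) = (L∘L′, R′∘R)`. -/
instance : Mul (Mult A) :=
  ⟨fun T U =>
    { L := T.L ∘ₗ U.L
      R := U.R ∘ₗ T.R
      hL := fun a b => by simp [U.hL, T.hL]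
      hR := fun a b => by simp [T.hR, U.hR]
      hC := fun a b => by simp [U.hC, T.hC] }⟩

instance : Add (Mult A) :=
  ⟨fun T U =>
    { L := T.L + U.L
      R := T.R + U.R
      hL := fun a b => by simp [T.hL, U.hL, add_mul]
      hR := fun a b => by simp [T.hR, U.hR, mul_add]
      hC := fun a b => by simp [T.hC, U.hC, add_mul, mul_add] }⟩

instance : SMul ℂ (Mult A) :=
  ⟨fun c T =>
    { L := c • T.L
      R := c • T.R
      hL := fun a b => by simp [T.hL, smul_mul_assoc]
      hR := fun a b => by simp [T.hR, mul_smul_comm]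
      hC := fun a b => by simp [T.hC, smul_mul_assoc, mul_smul_comm] }⟩

end Mult

section Maps

variable {A : Type*} [NonUnitalRing A] [Module ℂ A] [SMulCommClass ℂ A A] [IsScalarTower ℂ A A]

/-- `w ↦ w · (c ⊗ 1)` on `A ⊗ A`. -/
def rmul₁ (c : A) : A ⊗[ℂ] A →ₗ[ℂ] A ⊗[ℂ] A :=
  TensorProduct.map (LinearMap.mulRight ℂ c) LinearMap.id

/-- `w ↦ w · (1 ⊗ c)` on `A ⊗ A`. -/
def rmul₂ (c : A) : A ⊗[ℂ] A →ₗ[ℂ] A ⊗[ℂ] A :=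
  TensorProduct.map LinearMap.id (LinearMap.mulRight ℂ c)

/-- `w ↦ (c ⊗ 1) · w` on `A ⊗ A`. -/
def lmul₁ (c : A) : A ⊗[ℂ] A →ₗ[ℂ] A ⊗[ℂ] A :=
  TensorProduct.map (LinearMap.mulLeft ℂ c) LinearMap.id

/-- `w ↦ (1 ⊗ c) · w` on `A ⊗ A`. -/
def lmul₂ (c : A) : A ⊗[ℂ] A →ₗ[ℂ] A ⊗[ℂ] A :=
  TensorProduct.map LinearMap.id (LinearMap.mulLeft ℂ c)

/-- `b ↦ a ⊗ b`. -/
def tmulL (a : A) : A →ₗ[ℂ] A ⊗[ℂ] A := TensorProduct.mk ℂ A A a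

/-- `a ↦ a ⊗ b`. -/
def tmulR (b : A) : A →ₗ[ℂ] A ⊗[ℂ] A := (TensorProduct.mk ℂ A A).flip b

/-- `(x ⊗ y) ⊗ v ↦ x ⊗ (y * v)`. -/
def mulIn23 : (A ⊗[ℂ] A) ⊗[ℂ] A →ₗ[ℂ] A ⊗[ℂ] A :=
  TensorProduct.map LinearMap.id (LinearMap.mul' ℂ A) ∘ₗ
    (TensorProduct.assoc ℂ A A A).toLinearMap

/-- `(x ⊗ y) ⊗ v ↦ x ⊗ (v * y)`. -/
def mulIn23' : (A ⊗[ℂ] A) ⊗[ℂ] A →ₗ[ℂ] A ⊗[ℂ] A :=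
  TensorProduct.map LinearMap.id
      (LinearMap.mul' ℂ A ∘ₗ (TensorProduct.comm ℂ A A).toLinearMap) ∘ₗ
    (TensorProduct.assoc ℂ A A A).toLinearMap

/-- `u ⊗ (x ⊗ y) ↦ (x * u) ⊗ y`. -/
def mulIn1 : A ⊗[ℂ] (A ⊗[ℂ] A) →ₗ[ℂ] A ⊗[ℂ] A :=
  TensorProduct.map (LinearMap.mul' ℂ A) LinearMap.id ∘ₗ
    (TensorProduct.assoc ℂ A A A).symm.toLinearMap ∘ₗ
    (TensorProduct.leftComm ℂ A A A).toLinearMap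

/-- `u ⊗ (x ⊗ y) ↦ (u * x) ⊗ y`. -/
def mulIn1' : A ⊗[ℂ] (A ⊗[ℂ] A) →ₗ[ℂ] A ⊗[ℂ] A :=
  TensorProduct.map (LinearMap.mul' ℂ A ∘ₗ (TensorProduct.comm ℂ A A).toLinearMap)
      LinearMap.id ∘ₗ
    (TensorProduct.assoc ℂ A A A).symm.toLinearMap ∘ₗ
    (TensorProduct.leftComm ℂ A A A).toLinearMap

end Maps

/-- The basic data for a left multiplier bialgebroid: non-unital complex algebras `A`, `B`,
an algebra homomorphism `s : B → M(A)`, an algebra anti-homomorphism `t : B → M(A)` with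
commuting images; `A` is idempotent and non-degenerate, `s`, `t` are faithful and the spans
of `s(B)A` and `t(B)A` equal `A`. -/
structure BaseData (A B : Type*) [NonUnitalRing A] [Module ℂ A] [SMulCommClass ℂ A A]
    [IsScalarTower ℂ A A] [NonUnitalRing B] [Module ℂ B] [SMulCommClass ℂ B B]
    [IsScalarTower ℂ B B] where
  s : B → Mult A
  t : B → Mult A
  s_add : ∀ x y : B, s (x + y) = s x + s y
  s_smul : ∀ (c : ℂ) (x : B), s (c • x) = c • s x
  s_mul : ∀ x y : B, s (x * y) = s x * s y
  t_add : ∀ x y : B, t (x + y) = t x + t y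
  t_smul : ∀ (c : ℂ) (x : B), t (c • x) = c • t x
  t_mul : ∀ x y : B, t (x * y) = t y * t x
  st_comm : ∀ x y : B, s x * t y = t y * s x
  A_nd : ∀ a : A, (∀ b : A, a * b = 0) → a = 0
  A_idem : Submodule.span ℂ {z : A | ∃ a b : A, z = a * b} = ⊤
  s_faithful : ∀ x : B, (∀ a : A, (s x).L a = 0) → x = 0
  t_faithful : ∀ x : B, (∀ a : A, (t x).L a = 0) → x = 0
  s_span : Submodule.span ℂ {z : A | ∃ (x : B) (a : A), z = (s x).L a} = ⊤
  t_span : Submodule.span ℂ {z : A | ∃ (x : B) (a : A), z = (t x).L a} = ⊤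

section LeftBgd

variable {A B : Type*}
  [NonUnitalRing A] [Module ℂ A] [SMulCommClass ℂ A A] [IsScalarTower ℂ A A]
  [NonUnitalRing B] [Module ℂ B] [SMulCommClass ℂ B B] [IsScalarTower ℂ B B]

/-- The subspace of `A ⊗ A` by which one quotients to obtain `A ⊗̄ A`:
the span of all `s(x)a ⊗ b − a ⊗ t(x)b`. -/
def BaseData.relB (D : BaseData A B) : Submodule ℂ (A ⊗[ℂ] A) :=
  Submodule.span ℂ
    {z : A ⊗[ℂ] A | ∃ (x : B) (a b : A), z = (D.s x).L a ⊗ₜ[ℂ] b - a ⊗ₜ[ℂ] (D.t x).L b}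

/-- Non-degeneracy of `A ⊗̄ A` as a right module over `A ⊗ 1` and over `1 ⊗ A`,
formulated via representatives. -/
def condA3 (D : BaseData A B) : Prop :=
  (∀ u : A ⊗[ℂ] A, (∀ c : A, rmul₁ c u ∈ D.relB) → u ∈ D.relB) ∧
  (∀ u : A ⊗[ℂ] A, (∀ c : A, rmul₂ c u ∈ D.relB) → u ∈ D.relB)

/-- (L1): `T̃λ(s(x)a⊗b) = T̃λ(a⊗b)(1⊗t(x))` and `T̃ρ(a⊗t(y)b) = T̃ρ(a⊗b)(s(y)⊗1)`. -/
def condL1 (D : BaseData A B) (Tl Tr : A ⊗[ℂ] A →ₗ[ℂ] A ⊗[ℂ] A) : Prop :=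
  (∀ (x : B) (a b : A),
      Tl ((D.s x).L a ⊗ₜ[ℂ] b) -
        TensorProduct.map LinearMap.id (D.t x).R (Tl (a ⊗ₜ[ℂ] b)) ∈ D.relB) ∧
  (∀ (y : B) (a b : A),
      Tr (a ⊗ₜ[ℂ] (D.t y).L b) -
        TensorProduct.map (D.s y).R LinearMap.id (Tr (a ⊗ₜ[ℂ] b)) ∈ D.relB)

/-- (L2λ): `T̃λ(a ⊗ s(x)t(y)b s(x′)t(y′)) = (t(y)⊗s(x))·T̃λ(t(y′)a⊗b)·(1⊗s(x′))`. -/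
def condL2lam (D : BaseData A B) (Tl : A ⊗[ℂ] A →ₗ[ℂ] A ⊗[ℂ] A) : Prop :=
  ∀ (a b : A) (x x' y y' : B),
    Tl (a ⊗ₜ[ℂ] ((D.s x).L ((D.t y).L ((D.t y').R ((D.s x').R b))))) -
      TensorProduct.map (D.t y).L (D.s x).L
        (TensorProduct.map LinearMap.id (D.s x').R (Tl ((D.t y').L a ⊗ₜ[ℂ] b))) ∈ D.relB

/-- (L2ρ): `T̃ρ(s(x)t(y)a s(x′)t(y′) ⊗ b) = (t(y)⊗s(x))·T̃ρ(a⊗s(x′)b)·(t(y′)⊗1)`. -/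
def condL2rho (D : BaseData A B) (Tr : A ⊗[ℂ] A →ₗ[ℂ] A ⊗[ℂ] A) : Prop :=
  ∀ (a b : A) (x x' y y' : B),
    Tr (((D.s x).L ((D.t y).L ((D.t y').R ((D.s x').R a)))) ⊗ₜ[ℂ] b) -
      TensorProduct.map (D.t y).L (D.s x).L
        (TensorProduct.map (D.t y').R LinearMap.id (Tr (a ⊗ₜ[ℂ] (D.s x').L b))) ∈ D.relB

/-- (L3): `T̃λ(a⊗b)·(1⊗c) = T̃ρ(b⊗c)·(a⊗1)`. -/
def condL3 (D : BaseData A B) (Tl Tr : A ⊗[ℂ] A →ₗ[ℂ] A ⊗[ℂ] A) : Prop :=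
  ∀ a b c : A, rmul₂ c (Tl (a ⊗ₜ[ℂ] b)) - rmul₁ a (Tr (b ⊗ₜ[ℂ] c)) ∈ D.relB

/-- (L4): `T̃λ(ba⊗c) = T̃λ(b⊗c)·(a⊗1)` and `T̃ρ(a⊗bc) = T̃ρ(a⊗b)·(1⊗c)`. -/
def condL4 (D : BaseData A B) (Tl Tr : A ⊗[ℂ] A →ₗ[ℂ] A ⊗[ℂ] A) : Prop :=
  (∀ a b c : A, Tl ((b * a) ⊗ₜ[ℂ] c) - rmul₁ a (Tl (b ⊗ₜ[ℂ] c)) ∈ D.relB) ∧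
  (∀ a b c : A, Tr (a ⊗ₜ[ℂ] (b * c)) - rmul₂ c (Tr (a ⊗ₜ[ℂ] b)) ∈ D.relB)

/-- (L5λ): whenever `u = Σⱼ uⱼ⊗vⱼ` represents `T̃λ(a⊗c)`, one has
`T̃λ(a ⊗ bc) = Σⱼ T̃λ(uⱼ⊗b)·(1⊗vⱼ)`. -/
def condL5lam (D : BaseData A B) (Tl : A ⊗[ℂ] A →ₗ[ℂ] A ⊗[ℂ] A) : Prop :=
  ∀ (a b c : A) (u : A ⊗[ℂ] A), u - Tl (a ⊗ₜ[ℂ] c) ∈ D.relB →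
    Tl (a ⊗ₜ[ℂ] (b * c)) -
      mulIn23 (TensorProduct.map (Tl ∘ₗ tmulR b) LinearMap.id u) ∈ D.relB

/-- (L5ρ): whenever `u = Σⱼ uⱼ⊗vⱼ` represents `T̃ρ(b⊗c)`, one has
`T̃ρ(ab ⊗ c) = Σⱼ T̃ρ(a⊗vⱼ)·(uⱼ⊗1)`. -/
def condL5rho (D : BaseData A B) (Tr : A ⊗[ℂ] A →ₗ[ℂ] A ⊗[ℂ] A) : Prop :=
  ∀ (a b c : A) (u : A ⊗[ℂ] A), u - Tr (b ⊗ₜ[ℂ] c) ∈ D.relB →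
    Tr ((a * b) ⊗ₜ[ℂ] c) -
      mulIn1 (TensorProduct.map LinearMap.id (Tr ∘ₗ tmulL a) u) ∈ D.relB

/-- The subspace of `A ⊗ A ⊗ A` by which one quotients to obtain the two-sided balanced
triple tensor product: the span of all `s(x)a⊗b⊗c − a⊗t(x)b⊗c` and
`a⊗s(x)b⊗c − a⊗b⊗t(x)c`. -/
def BaseData.span₃ (D : BaseData A B) : Submodule ℂ (A ⊗[ℂ] (A ⊗[ℂ] A)) :=
  Submodule.span ℂ
    ({w : A ⊗[ℂ] (A ⊗[ℂ] A) | ∃ (x : B) (a b c : A),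
        w = (D.s x).L a ⊗ₜ[ℂ] (b ⊗ₜ[ℂ] c) - a ⊗ₜ[ℂ] ((D.t x).L b ⊗ₜ[ℂ] c)} ∪
     {w : A ⊗[ℂ] (A ⊗[ℂ] A) | ∃ (x : B) (a b c : A),
        w = a ⊗ₜ[ℂ] ((D.s x).L b ⊗ₜ[ℂ] c) - a ⊗ₜ[ℂ] (b ⊗ₜ[ℂ] (D.t x).L c)})

/-- (L6): mixed coassociativity; whenever `u` represents `T̃ρ(b⊗c)` and `p` represents
`T̃λ(a⊗b)`, the elements `Σⱼ T̃λ(a⊗uⱼ)⊗vⱼ` and `Σₖ pₖ⊗T̃ρ(qₖ⊗c)` agree in the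
balanced triple tensor product. -/
def condL6 (D : BaseData A B) (Tl Tr : A ⊗[ℂ] A →ₗ[ℂ] A ⊗[ℂ] A) : Prop :=
  ∀ (a b c : A) (u p : A ⊗[ℂ] A), u - Tr (b ⊗ₜ[ℂ] c) ∈ D.relB →
    p - Tl (a ⊗ₜ[ℂ] b) ∈ D.relB →
    (TensorProduct.assoc ℂ A A A)
        (TensorProduct.map (Tl ∘ₗ tmulL a) LinearMap.id u) -
      TensorProduct.map LinearMap.id (Tr ∘ₗ tmulR c) p ∈ D.span₃

/-- A left multiplier bialgebroid, presented by its canonical maps. -/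
def IsLeftBialgebroid (D : BaseData A B) (Tl Tr : A ⊗[ℂ] A →ₗ[ℂ] A ⊗[ℂ] A) : Prop :=
  condA3 D ∧ condL1 D Tl Tr ∧ condL2lam D Tl ∧ condL2rho D Tr ∧ condL3 D Tl Tr ∧
    condL4 D Tl Tr ∧ condL5lam D Tl ∧ condL5rho D Tr ∧ condL6 D Tl Tr

/-- A left counit for a left multiplier bialgebroid. -/
def IsLeftCounit (D : BaseData A B) (Tl Tr : A ⊗[ℂ] A →ₗ[ℂ] A ⊗[ℂ] A)
    (ε : A →ₗ[ℂ] B) : Prop :=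
  (∀ (x : B) (a : A), ε ((D.s x).L a) = x * ε a) ∧
  (∀ (y : B) (a : A), ε ((D.t y).L a) = ε a * y) ∧
  (∀ (a b : A) (n : ℕ) (uu vv : Fin n → A),
      (∑ j, uu j ⊗ₜ[ℂ] vv j) - Tr (a ⊗ₜ[ℂ] b) ∈ D.relB →
      ∑ j, (D.t (ε (uu j))).L (vv j) = a * b) ∧
  (∀ (a b : A) (n : ℕ) (uu vv : Fin n → A),
      (∑ j, uu j ⊗ₜ[ℂ] vv j) - Tl (a ⊗ₜ[ℂ] b) ∈ D.relB →
      ∑ j, (D.s (ε (vv j))).L (uu j) = a * b)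

/-- The domain relation for the canonical map `Tλ`: the span of all
`t(x)a ⊗ b − a ⊗ b·t(x)`. -/
def relLam (D : BaseData A B) : Submodule ℂ (A ⊗[ℂ] A) :=
  Submodule.span ℂ
    {z : A ⊗[ℂ] A | ∃ (x : B) (a b : A), z = (D.t x).L a ⊗ₜ[ℂ] b - a ⊗ₜ[ℂ] (D.t x).R b}

/-- The domain relation for the canonical map `Tρ`: the span of all
`a·s(x) ⊗ b − a ⊗ s(x)b`. -/
def relRho (D : BaseData A B) : Submodule ℂ (A ⊗[ℂ] A) :=
  Submodule.span ℂ
    {z : A ⊗[ℂ] A | ∃ (x : B) (a b : A), z = (D.s x).R a ⊗ₜ[ℂ] b - a ⊗ₜ[ℂ] (D.s x).L b}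

/-- The left ideal `Iˢ ⊆ B`. -/
def IdlS (D : BaseData A B) : Submodule ℂ B :=
  Submodule.span ℂ
    {z : B | ∃ φ : A →ₗ[ℂ] B, (∀ (x : B) (a : A), φ ((D.s x).L a) = x * φ a) ∧ ∃ a, z = φ a}

/-- The right ideal `Iᵗ ⊆ B`. -/
def IdlT (D : BaseData A B) : Submodule ℂ B :=
  Submodule.span ℂ
    {z : B | ∃ ψ : A →ₗ[ℂ] B, (∀ (x : B) (a : A), ψ ((D.t x).L a) = ψ a * x) ∧ ∃ a, z = ψ a}

/-- The elements witnessing left-fullness. -/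
def leftFullSet (D : BaseData A B) (Tr : A ⊗[ℂ] A →ₗ[ℂ] A ⊗[ℂ] A) : Set A :=
  {z : A | ∃ ψ : A →ₗ[ℂ] B, (∀ (x : B) (a : A), ψ ((D.t x).L a) = ψ a * x) ∧
    ∃ (a b : A) (n : ℕ) (uu vv : Fin n → A),
      (∑ j, uu j ⊗ₜ[ℂ] vv j) - Tr (a ⊗ₜ[ℂ] b) ∈ D.relB ∧
      z = ∑ j, (D.s (ψ (vv j))).L (uu j)}

/-- The elements witnessing right-fullness. -/
def rightFullSet (D : BaseData A B) (Tl : A ⊗[ℂ] A →ₗ[ℂ] A ⊗[ℂ] A) : Set A :=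
  {z : A | ∃ φ : A →ₗ[ℂ] B, (∀ (x : B) (a : A), φ ((D.s x).L a) = x * φ a) ∧
    ∃ (a b : A) (n : ℕ) (uu vv : Fin n → A),
      (∑ j, uu j ⊗ₜ[ℂ] vv j) - Tl (a ⊗ₜ[ℂ] b) ∈ D.relB ∧
      z = ∑ j, (D.t (φ (uu j))).L (vv j)}

/-- the algebra `B` is non-degenerate. -/
theorem stmt0 (D : BaseData A B) :
    ∀ x : B, ((∀ y : B, x * y = 0) → x = 0) ∧ ((∀ y : B, y * x = 0) → x = 0) := by
  have s_zero : ∀ a : A, (D.s 0).L a = 0 := by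
    intro a
    have h := D.s_smul 0 0
    rw [zero_smul] at h
    rw [h]
    show ((0:ℂ) • (D.s 0).L) a = 0
    simp
  have t_zero : ∀ a : A, (D.t 0).L a = 0 := by
    intro a
    have h := D.t_smul 0 0
    rw [zero_smul] at h
    rw [h]
    show ((0:ℂ) • (D.t 0).L) a = 0
    simp
  intro x
  constructor
  · intro hx
    apply D.s_faithful
    intro a
    have ha : a ∈ Submodule.span ℂ {z : A | ∃ (y : B) (c : A), z = (D.s y).L c} :=
      D.s_span ▸ Submodule.mem_top
    induction ha using Submodule.span_induction with
    | mem z hz =>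
      obtain ⟨y, c, rfl⟩ := hz
      have h := congrArg Mult.L (D.s_mul x y)
      have hxy : x * y = 0 := hx y
      rw [hxy] at h
      have : (D.s x).L ((D.s y).L c) = (D.s 0).L c := by
        rw [h]; rfl
      rw [this, s_zero]
    | zero => simp
    | add u v _ _ hu hv => rw [map_add, hu, hv, add_zero]
    | smul c u _ hu => rw [map_smul, hu, smul_zero]
  · intro hx
    apply D.t_faithful
    intro a
    have ha : a ∈ Submodule.span ℂ {z : A | ∃ (y : B) (c : A), z = (D.t y).L c} :=
      D.t_span ▸ Submodule.mem_top
    induction ha using Submodule.span_induction with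
    | mem z hz =>
      obtain ⟨y, c, rfl⟩ := hz
      have h := congrArg Mult.L (D.t_mul y x)
      have hxy : y * x = 0 := hx y
      rw [hxy] at h
      have : (D.t x).L ((D.t y).L c) = (D.t 0).L c := by
        rw [h]; rfl
      rw [this, t_zero]
    | zero => simp
    | add u v _ _ hu hv => rw [map_add, hu, hv, add_zero]
    | smul c u _ hu => rw [map_smul, hu, smul_zero]

end LeftBgd
end
end

section
/- If A has right local units, i.e. for every finite subset F ⊆ A there exists e ∈ A with ae = a for all a ∈ F, then A⊗̄A is non-degenerate as a right module over A⊗1 and over 1⊗A: an element w ∈ A⊗̄A with w·(c⊗1) = 0 for all c ∈ A is zero, and an element w ∈ A⊗̄A with w·(1⊗c) = 0 for all c ∈ A is zero. -/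
open scoped TensorProduct

noncomputable section

section LeftBgd

variable {A B : Type*}
  [NonUnitalRing A] [Module ℂ A] [SMulCommClass ℂ A A] [IsScalarTower ℂ A A]
  [NonUnitalRing B] [Module ℂ B] [SMulCommClass ℂ B B] [IsScalarTower ℂ B B]

/-- if `A` has right local units, then `A ⊗̄ A` is non-degenerate as a right
module over `A ⊗ 1` and over `1 ⊗ A`. -/
theorem stmt1 (D : BaseData A B)
    (hlu : ∀ F : Finset A, ∃ e : A, ∀ a ∈ F, a * e = a) :
    (∀ u : A ⊗[ℂ] A, (∀ c : A, rmul₁ c u ∈ D.relB) → u ∈ D.relB) ∧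
    (∀ u : A ⊗[ℂ] A, (∀ c : A, rmul₂ c u ∈ D.relB) → u ∈ D.relB) := by
  have key : ∀ u : A ⊗[ℂ] A, ∃ S : Finset (A × A), u = ∑ p ∈ S, p.1 ⊗ₜ[ℂ] p.2 :=
    fun u => TensorProduct.exists_finset u
  classical
  have _ : DecidableEq A := Classical.decEq A
  constructor
  · intro u hu
    obtain ⟨S, hS⟩ := key u
    obtain ⟨e, he⟩ := hlu (S.image Prod.fst)
    have : rmul₁ e u = u := by
      rw [hS, map_sum]
      refine Finset.sum_congr rfl fun p hp => ?_
      simp only [rmul₁, TensorProduct.map_tmul, LinearMap.mulRight_apply, LinearMap.id_coe,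
        id_eq]
      rw [he p.1 (Finset.mem_image_of_mem Prod.fst hp)]
    rw [← this]
    exact hu e
  · intro u hu
    obtain ⟨S, hS⟩ := key u
    obtain ⟨e, he⟩ := hlu (S.image Prod.snd)
    have : rmul₂ e u = u := by
      rw [hS, map_sum]
      refine Finset.sum_congr rfl fun p hp => ?_
      simp only [rmul₂, TensorProduct.map_tmul, LinearMap.mulRight_apply, LinearMap.id_coe,
        id_eq]
      rw [he p.2 (Finset.mem_image_of_mem Prod.snd hp)]
    rw [← this]
    exact hu e


end LeftBgd
end
end

section
/- Suppose that B is firm, i.e. the linear map (B⊗B)/span{xy⊗z−x⊗yz : x,y,z∈B} → B induced by multiplication is bijective, and that the following local projectivity conditions hold: for every finite subset F ⊆ A there exist finitely many linear maps υᵢ:A→B with υᵢ(s(x)a)=xυᵢ(a) (x∈B,a∈A) and eᵢ:B→A with eᵢ(xx′)=s(x)eᵢ(x′) (x,x′∈B) such that Σᵢ eᵢ(υᵢ(a))=a for all a∈F; and for every finite subset F ⊆ A there exist finitely many linear maps fⱼ:A→B with fⱼ(t(x)a)=fⱼ(a)x and ωⱼ:B→A with ωⱼ(x′x)=t(x)ωⱼ(x′)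 such that Σⱼ ωⱼ(fⱼ(a))=a for all a∈F. Then A⊗̄A is non-degenerate as a right module over A⊗1 and over 1⊗A: an element w ∈ A⊗̄A with w·(c⊗1) = 0 for all c ∈ A is zero, and an element w ∈ A⊗̄A with w·(1⊗c) = 0 for all c ∈ A is zero. -/
open scoped TensorProduct

noncomputable section

section LeftBgd

variable {A B : Type*}
  [NonUnitalRing A] [Module ℂ A] [SMulCommClass ℂ A A] [IsScalarTower ℂ A A]
  [NonUnitalRing B] [Module ℂ B] [SMulCommClass ℂ B B] [IsScalarTower ℂ B B]

/-! ### Auxiliary machinery for `stmt2` -/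

/-- `x ↦ (s x).L` as a linear map. -/
def sLmap (D : BaseData A B) : B →ₗ[ℂ] A →ₗ[ℂ] A where
  toFun x := (D.s x).L
  map_add' x y := by show (D.s (x + y)).L = _; rw [D.s_add]; rfl
  map_smul' c x := by show (D.s (c • x)).L = _; rw [D.s_smul]; rfl

/-- `x ↦ (t x).L` as a linear map. -/
def tLmap (D : BaseData A B) : B →ₗ[ℂ] A →ₗ[ℂ] A where
  toFun x := (D.t x).L
  map_add' x y := by show (D.t (x + y)).L = _; rw [D.t_add]; rfl
  map_smul' c x := by show (D.t (c • x)).L = _; rw [D.t_smul]; rfl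

@[simp] lemma sLmap_apply (D : BaseData A B) (x : B) (a : A) : sLmap D x a = (D.s x).L a := rfl
@[simp] lemma tLmap_apply (D : BaseData A B) (x : B) (a : A) : tLmap D x a = (D.t x).L a := rfl

/-- `y ⊗ z ↦ e z ⊗ ω y`. -/
def XiM (e ω : B →ₗ[ℂ] A) : B ⊗[ℂ] B →ₗ[ℂ] A ⊗[ℂ] A :=
  TensorProduct.map e ω ∘ₗ (TensorProduct.comm ℂ B B).toLinearMap

@[simp] lemma XiM_tmul (e ω : B →ₗ[ℂ] A) (y z : B) :
    XiM e ω (y ⊗ₜ[ℂ] z) = e z ⊗ₜ[ℂ] ω y := rfl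

@[simp] lemma tmulR_apply (b a : A) : tmulR b a = a ⊗ₜ[ℂ] b := rfl

lemma pi_gen (D : BaseData A B) (x : B) (a b : A) :
    D.relB.mkQ ((D.s x).L a ⊗ₜ[ℂ] b) = D.relB.mkQ (a ⊗ₜ[ℂ] (D.t x).L b) := by
  rw [← sub_eq_zero, ← map_sub, Submodule.mkQ_apply, Submodule.Quotient.mk_eq_zero]
  exact Submodule.subset_span ⟨x, a, b, rfl⟩

lemma XiM_ker (D : BaseData A B)
    (hfi : ∀ u : B ⊗[ℂ] B, LinearMap.mul' ℂ B u = 0 →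
      u ∈ Submodule.span ℂ
        {z : B ⊗[ℂ] B | ∃ x y w : B, z = (x * y) ⊗ₜ[ℂ] w - x ⊗ₜ[ℂ] (y * w)})
    (e ω : B →ₗ[ℂ] A)
    (he : ∀ x x' : B, e (x * x') = (D.s x).L (e x'))
    (hω : ∀ x' x : B, ω (x' * x) = (D.t x).L (ω x'))
    (v : B ⊗[ℂ] B) (hv : LinearMap.mul' ℂ B v = 0) :
    D.relB.mkQ (XiM e ω v) = 0 := by
  rw [Submodule.mkQ_apply, Submodule.Quotient.mk_eq_zero]
  have hle : Submodule.span ℂ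
      {z : B ⊗[ℂ] B | ∃ x y w : B, z = (x * y) ⊗ₜ[ℂ] w - x ⊗ₜ[ℂ] (y * w)} ≤
      Submodule.comap (XiM e ω) D.relB := by
    rw [Submodule.span_le]
    rintro _ ⟨x, y, w, rfl⟩
    have h1 : (D.s y).L (e w) ⊗ₜ[ℂ] (ω x) - (e w) ⊗ₜ[ℂ] ((D.t y).L (ω x)) ∈ D.relB :=
      Submodule.subset_span ⟨y, e w, ω x, rfl⟩
    simp only [SetLike.mem_coe, Submodule.mem_comap, map_sub, XiM_tmul, hω x y, he y w]
    rw [← neg_sub]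
    exact Submodule.neg_mem _ h1
  exact hle (hfi v hv)

lemma main_chain (D : BaseData A B)
    (hfi : ∀ u : B ⊗[ℂ] B, LinearMap.mul' ℂ B u = 0 →
      u ∈ Submodule.span ℂ
        {z : B ⊗[ℂ] B | ∃ x y w : B, z = (x * y) ⊗ₜ[ℂ] w - x ⊗ₜ[ℂ] (y * w)})
    (δ : B →ₗ[ℂ] B ⊗[ℂ] B) (hδ : ∀ x : B, LinearMap.mul' ℂ B (δ x) = x)
    {n m : ℕ} (υ : Fin n → (A →ₗ[ℂ] B)) (e : Fin n → (B →ₗ[ℂ] A))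
    (f : Fin m → (A →ₗ[ℂ] B)) (ω : Fin m → (B →ₗ[ℂ] A))
    (he : ∀ (k : Fin n) (x x' : B), e k (x * x') = (D.s x).L (e k x'))
    (hω : ∀ (j : Fin m) (x' x : B), ω j (x' * x) = (D.t x).L (ω j x'))
    (a b : A) (ha : ∑ k, e k (υ k a) = a) (hb : ∑ j, ω j (f j b) = b) :
    D.relB.mkQ (a ⊗ₜ[ℂ] b) =
      ∑ k, ∑ j, D.relB.mkQ (XiM (e k) (ω j) (δ (f j b * υ k a))) := by
  have hC3 : ∀ (k : Fin n) (j : Fin m) (v : B ⊗[ℂ] B),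
      D.relB.mkQ (XiM (e k) (ω j) v) =
        D.relB.mkQ (XiM (e k) (ω j) (δ (LinearMap.mul' ℂ B v))) := by
    intro k j v
    rw [← sub_eq_zero, ← map_sub, ← map_sub]
    exact XiM_ker D hfi (e k) (ω j) (he k) (hω j) _
      (by rw [map_sub, hδ, sub_self])
  have hmulL : ∀ (c : B) (v : B ⊗[ℂ] B),
      LinearMap.mul' ℂ B
        (TensorProduct.map (LinearMap.mulLeft ℂ c) LinearMap.id v) =
      c * LinearMap.mul' ℂ B v := by
    intro c v
    have h2 : (LinearMap.mul' ℂ B ∘ₗ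
        TensorProduct.map (LinearMap.mulLeft ℂ c) LinearMap.id) =
        LinearMap.mulLeft ℂ c ∘ₗ LinearMap.mul' ℂ B :=
      TensorProduct.ext' fun y z => by simp [mul_assoc]
    simpa using LinearMap.congr_fun h2 v
  have hA1 : ∀ k : Fin n,
      (D.relB.mkQ ∘ₗ tmulR b ∘ₗ e k ∘ₗ LinearMap.mul' ℂ B) =
        ∑ j, D.relB.mkQ ∘ₗ XiM (e k) (ω j) ∘ₗ
          TensorProduct.map (LinearMap.mulLeft ℂ (f j b)) LinearMap.id := by
    intro k
    apply TensorProduct.ext'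
    intro y z
    simp only [LinearMap.comp_apply, LinearMap.mul'_apply, LinearMap.sum_apply,
      TensorProduct.map_tmul, LinearMap.mulLeft_apply, LinearMap.id_coe, id_eq,
      XiM_tmul, tmulR_apply]
    rw [he k y z, pi_gen D y (e k z) b]
    conv_lhs => rw [← hb]
    rw [map_sum, TensorProduct.tmul_sum, map_sum]
    refine Finset.sum_congr rfl fun j _ => ?_
    rw [hω j (f j b) y]
  calc D.relB.mkQ (a ⊗ₜ[ℂ] b)
      = ∑ k, D.relB.mkQ (e k (υ k a) ⊗ₜ[ℂ] b) := by
        conv_lhs => rw [← ha, TensorProduct.sum_tmul]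
        rw [map_sum]
    _ = ∑ k, ∑ j, D.relB.mkQ (XiM (e k) (ω j) (δ (f j b * υ k a))) := by
        refine Finset.sum_congr rfl fun k _ => ?_
        have h1 := LinearMap.congr_fun (hA1 k) (δ (υ k a))
        simp only [LinearMap.comp_apply, LinearMap.sum_apply, hδ, tmulR_apply] at h1
        rw [h1]
        refine Finset.sum_congr rfl fun j _ => ?_
        rw [hC3 k j, hmulL, hδ]

lemma assemble (D : BaseData A B)
    (hfi : ∀ u : B ⊗[ℂ] B, LinearMap.mul' ℂ B u = 0 →
      u ∈ Submodule.span ℂ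
        {z : B ⊗[ℂ] B | ∃ x y w : B, z = (x * y) ⊗ₜ[ℂ] w - x ⊗ₜ[ℂ] (y * w)})
    (δ : B →ₗ[ℂ] B ⊗[ℂ] B) (hδ : ∀ x : B, LinearMap.mul' ℂ B (δ x) = x)
    {n m : ℕ} (υ : Fin n → (A →ₗ[ℂ] B)) (e : Fin n → (B →ₗ[ℂ] A))
    (f : Fin m → (A →ₗ[ℂ] B)) (ω : Fin m → (B →ₗ[ℂ] A))
    (he : ∀ (k : Fin n) (x x' : B), e k (x * x') = (D.s x).L (e k x'))
    (hω : ∀ (j : Fin m) (x' x : B), ω j (x' * x) = (D.t x).L (ω j x'))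
    (u : A ⊗[ℂ] A) (S : Finset (A × A)) (hS : u = ∑ p ∈ S, p.1 ⊗ₜ[ℂ] p.2)
    (hFa : ∀ p ∈ S, ∑ k, e k (υ k p.1) = p.1)
    (hFb : ∀ p ∈ S, ∑ j, ω j (f j p.2) = p.2)
    (hν : ∀ (k : Fin n) (j : Fin m), (∑ p ∈ S, f j p.2 * υ k p.1) = 0) :
    u ∈ D.relB := by
  have hπ : D.relB.mkQ u = 0 := by
    rw [hS, map_sum]
    calc ∑ p ∈ S, D.relB.mkQ (p.1 ⊗ₜ[ℂ] p.2)
        = ∑ p ∈ S, ∑ k, ∑ j,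
            D.relB.mkQ (XiM (e k) (ω j) (δ (f j p.2 * υ k p.1))) :=
          Finset.sum_congr rfl fun p hp =>
            main_chain D hfi δ hδ υ e f ω he hω p.1 p.2 (hFa p hp) (hFb p hp)
      _ = ∑ k, ∑ j, ∑ p ∈ S,
            D.relB.mkQ (XiM (e k) (ω j) (δ (f j p.2 * υ k p.1))) := by
          rw [Finset.sum_comm]
          exact Finset.sum_congr rfl fun k _ => Finset.sum_comm
      _ = 0 := by
          refine Finset.sum_eq_zero fun k _ => Finset.sum_eq_zero fun j _ => ?_
          rw [← map_sum, ← map_sum, ← map_sum, hν k j]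
          simp
  rwa [Submodule.mkQ_apply, Submodule.Quotient.mk_eq_zero] at hπ

/-- if `B` is firm and the `B`-modules `ₛA` and `Aₜ` are locally projective,
then `A ⊗̄ A` is non-degenerate over `A ⊗ 1` and over `1 ⊗ A`. -/
theorem stmt2 (D : BaseData A B)
    (hfirm_surj : Submodule.span ℂ {z : B | ∃ x y : B, z = x * y} = ⊤)
    (hfirm_inj : ∀ u : B ⊗[ℂ] B, LinearMap.mul' ℂ B u = 0 →
      u ∈ Submodule.span ℂ
        {z : B ⊗[ℂ] B | ∃ x y w : B, z = (x * y) ⊗ₜ[ℂ] w - x ⊗ₜ[ℂ] (y * w)})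
    (hlp_s : ∀ F : Finset A, ∃ (n : ℕ) (υ : Fin n → (A →ₗ[ℂ] B)) (e : Fin n → (B →ₗ[ℂ] A)),
      (∀ (i : Fin n) (x : B) (a : A), υ i ((D.s x).L a) = x * υ i a) ∧
      (∀ (i : Fin n) (x x' : B), e i (x * x') = (D.s x).L (e i x')) ∧
      ∀ a ∈ F, ∑ i, e i (υ i a) = a)
    (hlp_t : ∀ F : Finset A, ∃ (n : ℕ) (f : Fin n → (A →ₗ[ℂ] B)) (ω : Fin n → (B →ₗ[ℂ] A)),
      (∀ (i : Fin n) (x : B) (a : A), f i ((D.t x).L a) = f i a * x) ∧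
      (∀ (i : Fin n) (x x' : B), ω i (x' * x) = (D.t x).L (ω i x')) ∧
      ∀ a ∈ F, ∑ i, ω i (f i a) = a) :
    (∀ u : A ⊗[ℂ] A, (∀ c : A, rmul₁ c u ∈ D.relB) → u ∈ D.relB) ∧
    (∀ u : A ⊗[ℂ] A, (∀ c : A, rmul₂ c u ∈ D.relB) → u ∈ D.relB) := by
  have hsurj : LinearMap.range (LinearMap.mul' ℂ B) = ⊤ := by
    rw [eq_top_iff, ← hfirm_surj]
    refine Submodule.span_le.mpr ?_
    rintro _ ⟨x, y, rfl⟩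
    exact ⟨x ⊗ₜ[ℂ] y, LinearMap.mul'_apply⟩
  obtain ⟨δ, hδc⟩ := LinearMap.exists_rightInverse_of_surjective (LinearMap.mul' ℂ B) hsurj
  have hδ : ∀ x : B, LinearMap.mul' ℂ B (δ x) = x := fun x => LinearMap.congr_fun hδc x
  classical
  constructor
  · -- non-degeneracy over `A ⊗ 1`
    intro u hu
    obtain ⟨S, hS⟩ := TensorProduct.exists_finset u
    obtain ⟨n, υ, e, hυ, he, hra⟩ := hlp_s (S.image Prod.fst)
    obtain ⟨m, f, ω, hf, hω₀, hrb⟩ := hlp_t (S.image Prod.snd)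
    have hω : ∀ (j : Fin m) (x' x : B), ω j (x' * x) = (D.t x).L (ω j x') :=
      fun j x' x => hω₀ j x x'
    set ρ : Fin m → (A ⊗[ℂ] A →ₗ[ℂ] A) :=
      fun j => TensorProduct.lift ((sLmap D ∘ₗ f j).flip) with hρdef
    have hρtm : ∀ (j : Fin m) (a b : A), ρ j (a ⊗ₜ[ℂ] b) = (D.s (f j b)).L a := by
      intro j a b; simp [hρdef]
    have hρker : ∀ j, D.relB ≤ LinearMap.ker (ρ j) := by
      intro j
      refine Submodule.span_le.mpr ?_
      rintro _ ⟨x, a, b, rfl⟩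
      simp only [SetLike.mem_coe, LinearMap.mem_ker, map_sub, hρtm]
      rw [hf j x b, D.s_mul]
      exact sub_eq_zero_of_eq rfl
    have hρ0 : ∀ j, ρ j u = 0 := by
      intro j
      refine D.A_nd _ fun c => ?_
      have h2 : (ρ j ∘ₗ rmul₁ c) = (LinearMap.mulRight ℂ c) ∘ₗ ρ j :=
        TensorProduct.ext' fun a b => by
          simp [rmul₁, hρtm, (D.s (f j b)).hL]
      have h3 := hρker j (hu c)
      rw [LinearMap.mem_ker] at h3
      have h4 := LinearMap.congr_fun h2 u
      simp only [LinearMap.comp_apply, LinearMap.mulRight_apply] at h4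
      rw [h3] at h4
      exact h4.symm
    refine assemble D hfirm_inj δ hδ υ e f ω he hω u S hS
      (fun p hp => hra p.1 (Finset.mem_image_of_mem _ hp))
      (fun p hp => hrb p.2 (Finset.mem_image_of_mem _ hp))
      (fun k j => ?_)
    have h5 : (∑ p ∈ S, f j p.2 * υ k p.1) = υ k (ρ j u) := by
      rw [hS, map_sum, map_sum]
      refine Finset.sum_congr rfl fun p _ => ?_
      rw [hρtm, hυ k (f j p.2) p.1]
    rw [h5, hρ0, map_zero]
  · -- non-degeneracy over `1 ⊗ A`
    intro u hu
    obtain ⟨S, hS⟩ := TensorProduct.exists_finset u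
    obtain ⟨n, υ, e, hυ, he, hra⟩ := hlp_s (S.image Prod.fst)
    obtain ⟨m, f, ω, hf, hω₀, hrb⟩ := hlp_t (S.image Prod.snd)
    have hω : ∀ (j : Fin m) (x' x : B), ω j (x' * x) = (D.t x).L (ω j x') :=
      fun j x' x => hω₀ j x x'
    set μ : Fin n → (A ⊗[ℂ] A →ₗ[ℂ] A) :=
      fun k => TensorProduct.lift (tLmap D ∘ₗ υ k) with hμdef
    have hμtm : ∀ (k : Fin n) (a b : A), μ k (a ⊗ₜ[ℂ] b) = (D.t (υ k a)).L b := by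
      intro k a b; simp [hμdef]
    have hμker : ∀ k, D.relB ≤ LinearMap.ker (μ k) := by
      intro k
      refine Submodule.span_le.mpr ?_
      rintro _ ⟨x, a, b, rfl⟩
      simp only [SetLike.mem_coe, LinearMap.mem_ker, map_sub, hμtm]
      rw [hυ k x a, D.t_mul]
      exact sub_eq_zero_of_eq rfl
    have hμ0 : ∀ k, μ k u = 0 := by
      intro k
      refine D.A_nd _ fun c => ?_
      have h2 : (μ k ∘ₗ rmul₂ c) = (LinearMap.mulRight ℂ c) ∘ₗ μ k :=
        TensorProduct.ext' fun a b => by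
          simp [rmul₂, hμtm, (D.t (υ k a)).hL]
      have h3 := hμker k (hu c)
      rw [LinearMap.mem_ker] at h3
      have h4 := LinearMap.congr_fun h2 u
      simp only [LinearMap.comp_apply, LinearMap.mulRight_apply] at h4
      rw [h3] at h4
      exact h4.symm
    refine assemble D hfirm_inj δ hδ υ e f ω he hω u S hS
      (fun p hp => hra p.1 (Finset.mem_image_of_mem _ hp))
      (fun p hp => hrb p.2 (Finset.mem_image_of_mem _ hp))
      (fun k j => ?_)
    have h5 : (∑ p ∈ S, f j p.2 * υ k p.1) = f j (μ k u) := by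
      rw [hS, map_sum, map_sum]
      refine Finset.sum_congr rfl fun p _ => ?_
      rw [hμtm, hf j (υ k p.1) p.2]
    rw [h5, hμ0, map_zero]


end LeftBgd
end
end

section
/- Assume the pair (T̃λ,T̃ρ) satisfies (L1), (L3) and (L4). Then the following two multiplicativity conditions are equivalent: (L5λ) whenever Σⱼuⱼ⊗vⱼ ∈ A⊗A represents T̃λ(a⊗c), one has T̃λ(a⊗bc)=Σⱼ T̃λ(uⱼ⊗b)·(1⊗vⱼ) for all a,b,c∈A; (L5ρ) whenever Σⱼuⱼ⊗vⱼ represents T̃ρ(b⊗c), one has T̃ρ(ab⊗c)=Σⱼ T̃ρ(a⊗vⱼ)·(uⱼ⊗1) for all a,b,c∈A. (In each condition the right-hand side is independent of the chosen representative.) -/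
open scoped TensorProduct

noncomputable section

section LeftBgd

variable {A B : Type*}
  [NonUnitalRing A] [Module ℂ A] [SMulCommClass ℂ A A] [IsScalarTower ℂ A A]
  [NonUnitalRing B] [Module ℂ B] [SMulCommClass ℂ B B] [IsScalarTower ℂ B B]

section StmtThreeAux

lemma rmul₁_tmul (c a b : A) : rmul₁ c (a ⊗ₜ[ℂ] b) = (a * c) ⊗ₜ[ℂ] b := by
  simp [rmul₁]

lemma rmul₂_tmul (c a b : A) : rmul₂ c (a ⊗ₜ[ℂ] b) = a ⊗ₜ[ℂ] (b * c) := by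
  simp [rmul₂]

lemma mulIn23_tmul (w : A ⊗[ℂ] A) (n : A) : mulIn23 (w ⊗ₜ[ℂ] n) = rmul₂ n w := by
  induction w using TensorProduct.induction_on with
  | zero => simp
  | tmul x y => simp [mulIn23, rmul₂_tmul]
  | add w1 w2 h1 h2 => simp [TensorProduct.add_tmul, h1, h2]

lemma mulIn1_tmul (m : A) (w : A ⊗[ℂ] A) : mulIn1 (m ⊗ₜ[ℂ] w) = rmul₁ m w := by
  induction w using TensorProduct.induction_on with
  | zero => simp
  | tmul x y => simp [mulIn1, rmul₁_tmul]
  | add w1 w2 h1 h2 => simp [TensorProduct.tmul_add, h1, h2]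

lemma mem_relB (D : BaseData A B) (x : B) (p q : A) :
    (D.s x).L p ⊗ₜ[ℂ] q - p ⊗ₜ[ℂ] (D.t x).L q ∈ D.relB :=
  Submodule.subset_span ⟨x, p, q, rfl⟩

lemma relB_stable (D : BaseData A B) (f : A ⊗[ℂ] A →ₗ[ℂ] A ⊗[ℂ] A)
    (hf : ∀ (x : B) (p q : A),
      f ((D.s x).L p ⊗ₜ[ℂ] q - p ⊗ₜ[ℂ] (D.t x).L q) ∈ D.relB)
    {z : A ⊗[ℂ] A} (hz : z ∈ D.relB) : f z ∈ D.relB := by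
  induction hz using Submodule.span_induction with
  | mem w hw => obtain ⟨x, p, q, rfl⟩ := hw; exact hf x p q
  | zero => simpa using D.relB.zero_mem
  | add _ _ _ _ h1 h2 => simpa [map_add] using D.relB.add_mem h1 h2
  | smul r _ _ h => simpa [map_smul] using D.relB.smul_mem r h

lemma rmul₁_relB (D : BaseData A B) (c : A) {z : A ⊗[ℂ] A} (hz : z ∈ D.relB) :
    rmul₁ c z ∈ D.relB := by
  refine relB_stable D (rmul₁ c) (fun x p q => ?_) hz
  rw [map_sub, rmul₁_tmul, rmul₁_tmul, ← (D.s x).hL]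
  exact mem_relB D x (p * c) q

lemma rmul₂_relB (D : BaseData A B) (c : A) {z : A ⊗[ℂ] A} (hz : z ∈ D.relB) :
    rmul₂ c z ∈ D.relB := by
  refine relB_stable D (rmul₂ c) (fun x p q => ?_) hz
  rw [map_sub, rmul₂_tmul, rmul₂_tmul, ← (D.t x).hL]
  exact mem_relB D x p (q * c)

lemma rmul₂_map_R (D : BaseData A B) (x : B) (q : A) (w : A ⊗[ℂ] A) :
    rmul₂ q (TensorProduct.map LinearMap.id (D.t x).R w) = rmul₂ ((D.t x).L q) w := by
  induction w using TensorProduct.induction_on with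
  | zero => simp
  | tmul u v => simp [rmul₂_tmul, (D.t x).hC]
  | add w1 w2 h1 h2 => simp [h1, h2]

lemma rmul₁_map_R (D : BaseData A B) (y : B) (p : A) (w : A ⊗[ℂ] A) :
    rmul₁ p (TensorProduct.map (D.s y).R LinearMap.id w) = rmul₁ ((D.s y).L p) w := by
  induction w using TensorProduct.induction_on with
  | zero => simp
  | tmul u v => simp [rmul₁_tmul, (D.s y).hC]
  | add w1 w2 h1 h2 => simp [h1, h2]

lemma rmul₂_rmul₂ (c n : A) (w : A ⊗[ℂ] A) :
    rmul₂ c (rmul₂ n w) = rmul₂ (n * c) w := by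
  induction w using TensorProduct.induction_on with
  | zero => simp
  | tmul x y => simp [rmul₂_tmul, mul_assoc]
  | add w1 w2 h1 h2 => simp [h1, h2]

lemma rmul₁_rmul₁ (e m : A) (w : A ⊗[ℂ] A) :
    rmul₁ e (rmul₁ m w) = rmul₁ (m * e) w := by
  induction w using TensorProduct.induction_on with
  | zero => simp
  | tmul x y => simp [rmul₁_tmul, mul_assoc]
  | add w1 w2 h1 h2 => simp [h1, h2]

/-- `Fm Tl b (m ⊗ n) = T̃λ(m ⊗ b) · (1 ⊗ n)`. -/
def Fm (Tl : A ⊗[ℂ] A →ₗ[ℂ] A ⊗[ℂ] A) (b : A) : A ⊗[ℂ] A →ₗ[ℂ] A ⊗[ℂ] A :=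
  mulIn23 ∘ₗ TensorProduct.map (Tl ∘ₗ tmulR b) LinearMap.id

/-- `Gm Tr a (m ⊗ n) = T̃ρ(a ⊗ n) · (m ⊗ 1)`. -/
def Gm (Tr : A ⊗[ℂ] A →ₗ[ℂ] A ⊗[ℂ] A) (a : A) : A ⊗[ℂ] A →ₗ[ℂ] A ⊗[ℂ] A :=
  mulIn1 ∘ₗ TensorProduct.map LinearMap.id (Tr ∘ₗ tmulL a)

lemma Fm_apply (Tl : A ⊗[ℂ] A →ₗ[ℂ] A ⊗[ℂ] A) (b : A) (u : A ⊗[ℂ] A) :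
    Fm Tl b u = mulIn23 (TensorProduct.map (Tl ∘ₗ tmulR b) LinearMap.id u) := rfl

lemma Gm_apply (Tr : A ⊗[ℂ] A →ₗ[ℂ] A ⊗[ℂ] A) (a : A) (u : A ⊗[ℂ] A) :
    Gm Tr a u = mulIn1 (TensorProduct.map LinearMap.id (Tr ∘ₗ tmulL a) u) := rfl

lemma Fm_tmul (Tl : A ⊗[ℂ] A →ₗ[ℂ] A ⊗[ℂ] A) (b m n : A) :
    Fm Tl b (m ⊗ₜ[ℂ] n) = rmul₂ n (Tl (m ⊗ₜ[ℂ] b)) := by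
  simp [Fm, tmulR, mulIn23_tmul]

lemma Gm_tmul (Tr : A ⊗[ℂ] A →ₗ[ℂ] A ⊗[ℂ] A) (a m n : A) :
    Gm Tr a (m ⊗ₜ[ℂ] n) = rmul₁ m (Tr (a ⊗ₜ[ℂ] n)) := by
  simp [Gm, tmulL, mulIn1_tmul]

lemma Fm_rmul₂ (Tl : A ⊗[ℂ] A →ₗ[ℂ] A ⊗[ℂ] A) (b c : A) (w : A ⊗[ℂ] A) :
    Fm Tl b (rmul₂ c w) = rmul₂ c (Fm Tl b w) := by
  induction w using TensorProduct.induction_on with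
  | zero => simp
  | tmul m n => rw [rmul₂_tmul, Fm_tmul, Fm_tmul, rmul₂_rmul₂]
  | add w1 w2 h1 h2 => simp [h1, h2]

lemma Gm_rmul₁ (Tr : A ⊗[ℂ] A →ₗ[ℂ] A ⊗[ℂ] A) (a e : A) (w : A ⊗[ℂ] A) :
    Gm Tr a (rmul₁ e w) = rmul₁ e (Gm Tr a w) := by
  induction w using TensorProduct.induction_on with
  | zero => simp
  | tmul m n => rw [rmul₁_tmul, Gm_tmul, Gm_tmul, rmul₁_rmul₁]
  | add w1 w2 h1 h2 => simp [h1, h2]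

lemma Fm_relB (D : BaseData A B) (Tl : A ⊗[ℂ] A →ₗ[ℂ] A ⊗[ℂ] A)
    (hL1 : ∀ (x : B) (a b : A),
      Tl ((D.s x).L a ⊗ₜ[ℂ] b) -
        TensorProduct.map LinearMap.id (D.t x).R (Tl (a ⊗ₜ[ℂ] b)) ∈ D.relB)
    (b : A) {z : A ⊗[ℂ] A} (hz : z ∈ D.relB) : Fm Tl b z ∈ D.relB := by
  refine relB_stable D (Fm Tl b) (fun x p q => ?_) hz
  rw [map_sub, Fm_tmul, Fm_tmul]
  have h := rmul₂_relB D q (hL1 x p b)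
  rw [map_sub, rmul₂_map_R] at h
  exact h

lemma Gm_relB (D : BaseData A B) (Tr : A ⊗[ℂ] A →ₗ[ℂ] A ⊗[ℂ] A)
    (hL1 : ∀ (y : B) (a b : A),
      Tr (a ⊗ₜ[ℂ] (D.t y).L b) -
        TensorProduct.map (D.s y).R LinearMap.id (Tr (a ⊗ₜ[ℂ] b)) ∈ D.relB)
    (a : A) {z : A ⊗[ℂ] A} (hz : z ∈ D.relB) : Gm Tr a z ∈ D.relB := by
  refine relB_stable D (Gm Tr a) (fun x p q => ?_) hz
  rw [map_sub, Gm_tmul, Gm_tmul]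
  have h := rmul₁_relB D p (hL1 x a q)
  rw [map_sub, rmul₁_map_R] at h
  simpa using D.relB.neg_mem h

lemma F_sub_G (D : BaseData A B) (Tl Tr : A ⊗[ℂ] A →ₗ[ℂ] A ⊗[ℂ] A)
    (h3 : condL3 D Tl Tr) (b : A) (w : A ⊗[ℂ] A) :
    Fm Tl b w - Gm Tr b w ∈ D.relB := by
  induction w using TensorProduct.induction_on with
  | zero => simpa using D.relB.zero_mem
  | tmul m n => rw [Fm_tmul, Gm_tmul]; exact h3 m b n
  | add w1 w2 h1 h2 =>
      have := D.relB.add_mem h1 h2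
      rw [sub_add_sub_comm] at this
      simpa [map_add] using this

end StmtThreeAux

/-- given (L1), (L3), (L4), the multiplicativity conditions (L5λ) and (L5ρ)
are equivalent. -/
theorem stmt3 (D : BaseData A B) (hA3 : condA3 D)
    (Tl Tr : A ⊗[ℂ] A →ₗ[ℂ] A ⊗[ℂ] A)
    (h1 : condL1 D Tl Tr) (h3 : condL3 D Tl Tr) (h4 : condL4 D Tl Tr) :
    condL5lam D Tl ↔ condL5rho D Tr := by
  obtain ⟨hA31, hA32⟩ := hA3
  constructor
  · intro h5 a b c u hu
    rw [← Gm_apply]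
    refine hA31 _ (fun e => ?_)
    rw [map_sub, ← Gm_rmul₁]
    have h01 : rmul₁ e (Tr ((a * b) ⊗ₜ[ℂ] c)) - rmul₂ c (Tl (e ⊗ₜ[ℂ] (a * b))) ∈ D.relB := by
      simpa [neg_sub] using D.relB.neg_mem (h3 e (a * b) c)
    have h12 : rmul₂ c (Tl (e ⊗ₜ[ℂ] (a * b))) - rmul₂ c (Fm Tl a (Tl (e ⊗ₜ[ℂ] b))) ∈ D.relB := by
      have h := rmul₂_relB D c (h5 e a b (Tl (e ⊗ₜ[ℂ] b)) (by simpa using D.relB.zero_mem))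
      rw [map_sub] at h
      simpa [Fm_apply] using h
    have h34 : Fm Tl a (rmul₂ c (Tl (e ⊗ₜ[ℂ] b))) - Fm Tl a (rmul₁ e u) ∈ D.relB := by
      have k3 : rmul₁ e (Tr (b ⊗ₜ[ℂ] c)) - rmul₁ e u ∈ D.relB := by
        have h := rmul₁_relB D e hu
        rw [map_sub] at h
        simpa [neg_sub] using D.relB.neg_mem h
      have k1 : rmul₂ c (Tl (e ⊗ₜ[ℂ] b)) - rmul₁ e u ∈ D.relB := by
        have h := D.relB.add_mem (h3 e b c) k3
        rwa [sub_add_sub_cancel] at h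
      have h := Fm_relB D Tl h1.1 a k1
      rwa [map_sub] at h
    have h45 : Fm Tl a (rmul₁ e u) - Gm Tr a (rmul₁ e u) ∈ D.relB :=
      F_sub_G D Tl Tr h3 a _
    have key : rmul₁ e (Tr ((a * b) ⊗ₜ[ℂ] c)) - Gm Tr a (rmul₁ e u)
        = (rmul₁ e (Tr ((a * b) ⊗ₜ[ℂ] c)) - rmul₂ c (Tl (e ⊗ₜ[ℂ] (a * b))))
          + ((rmul₂ c (Tl (e ⊗ₜ[ℂ] (a * b))) - rmul₂ c (Fm Tl a (Tl (e ⊗ₜ[ℂ] b))))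
          + ((Fm Tl a (rmul₂ c (Tl (e ⊗ₜ[ℂ] b))) - Fm Tl a (rmul₁ e u))
          + (Fm Tl a (rmul₁ e u) - Gm Tr a (rmul₁ e u)))) := by
      rw [Fm_rmul₂]; abel
    rw [key]
    exact D.relB.add_mem h01 (D.relB.add_mem h12 (D.relB.add_mem h34 h45))
  · intro h5 a b c u hu
    rw [← Fm_apply]
    refine hA32 _ (fun e => ?_)
    rw [map_sub, ← Fm_rmul₂]
    have h01 : rmul₂ e (Tl (a ⊗ₜ[ℂ] (b * c))) - rmul₁ a (Tr ((b * c) ⊗ₜ[ℂ] e)) ∈ D.relB :=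
      h3 a (b * c) e
    have h12 : rmul₁ a (Tr ((b * c) ⊗ₜ[ℂ] e)) - rmul₁ a (Gm Tr b (Tr (c ⊗ₜ[ℂ] e))) ∈ D.relB := by
      have h := rmul₁_relB D a (h5 b c e (Tr (c ⊗ₜ[ℂ] e)) (by simpa using D.relB.zero_mem))
      rw [map_sub] at h
      simpa [Gm_apply] using h
    have h34 : Gm Tr b (rmul₁ a (Tr (c ⊗ₜ[ℂ] e))) - Gm Tr b (rmul₂ e u) ∈ D.relB := by
      have k3 : rmul₂ e (Tl (a ⊗ₜ[ℂ] c)) - rmul₂ e u ∈ D.relB := by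
        have h := rmul₂_relB D e hu
        rw [map_sub] at h
        simpa [neg_sub] using D.relB.neg_mem h
      have k1 : rmul₁ a (Tr (c ⊗ₜ[ℂ] e)) - rmul₂ e u ∈ D.relB := by
        have k0 : rmul₁ a (Tr (c ⊗ₜ[ℂ] e)) - rmul₂ e (Tl (a ⊗ₜ[ℂ] c)) ∈ D.relB := by
          simpa [neg_sub] using D.relB.neg_mem (h3 a c e)
        have h := D.relB.add_mem k0 k3
        rwa [sub_add_sub_cancel] at h
      have h := Gm_relB D Tr h1.2 b k1
      rwa [map_sub] at h
    have h45 : Gm Tr b (rmul₂ e u) - Fm Tl b (rmul₂ e u) ∈ D.relB := by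
      simpa [neg_sub] using D.relB.neg_mem (F_sub_G D Tl Tr h3 b (rmul₂ e u))
    have key : rmul₂ e (Tl (a ⊗ₜ[ℂ] (b * c))) - Fm Tl b (rmul₂ e u)
        = (rmul₂ e (Tl (a ⊗ₜ[ℂ] (b * c))) - rmul₁ a (Tr ((b * c) ⊗ₜ[ℂ] e)))
          + ((rmul₁ a (Tr ((b * c) ⊗ₜ[ℂ] e)) - rmul₁ a (Gm Tr b (Tr (c ⊗ₜ[ℂ] e))))
          + ((Gm Tr b (rmul₁ a (Tr (c ⊗ₜ[ℂ] e))) - Gm Tr b (rmul₂ e u))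
          + (Gm Tr b (rmul₂ e u) - Fm Tl b (rmul₂ e u)))) := by
      rw [Gm_rmul₁]; abel
    rw [key]
    exact D.relB.add_mem h01 (D.relB.add_mem h12 (D.relB.add_mem h34 h45))

end LeftBgd
end
end

section
/- If the left multiplier bialgebroid is left-full, i.e. A is spanned by the elements Σⱼ s(ψ(vⱼ))uⱼ where a,b∈A, ψ:A→B is linear with ψ(t(x)a′)=ψ(a′)x for all x∈B,a′∈A, and Σⱼuⱼ⊗vⱼ∈A⊗A represents T̃ρ(a⊗b), or right-full, i.e. A is spanned by the elements Σⱼ t(φ(uⱼ))vⱼ where φ:A→B is linear with φ(s(x)a′)=xφ(a′) and Σⱼuⱼ⊗vⱼ represents T̃λ(a⊗b), then there exists at most one left counit ε:A→B. -/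
open scoped TensorProduct

noncomputable section

section LeftBgd

variable {A B : Type*}
  [NonUnitalRing A] [Module ℂ A] [SMulCommClass ℂ A A] [IsScalarTower ℂ A A]
  [NonUnitalRing B] [Module ℂ B] [SMulCommClass ℂ B B] [IsScalarTower ℂ B B]

/-- a left-full or right-full left multiplier bialgebroid has at most one
left counit. -/
theorem stmt6 (D : BaseData A B) (Tl Tr : A ⊗[ℂ] A →ₗ[ℂ] A ⊗[ℂ] A)
    (h : IsLeftBialgebroid D Tl Tr)
    (hfull : Submodule.span ℂ (leftFullSet D Tr) = ⊤ ∨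
      Submodule.span ℂ (rightFullSet D Tl) = ⊤) :
    ∀ ε₁ ε₂ : A →ₗ[ℂ] B, IsLeftCounit D Tl Tr ε₁ → IsLeftCounit D Tl Tr ε₂ → ε₁ = ε₂ := by
  intro ε₁ ε₂ h₁ h₂
  -- On left-full elements, any counit takes the value ψ (a * b).
  have keyL : ∀ (ε : A →ₗ[ℂ] B), IsLeftCounit D Tl Tr ε →
      ∀ (ψ : A →ₗ[ℂ] B), (∀ (x : B) (a : A), ψ ((D.t x).L a) = ψ a * x) →
      ∀ (a b : A) (n : ℕ) (uu vv : Fin n → A),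
        (∑ j, uu j ⊗ₜ[ℂ] vv j) - Tr (a ⊗ₜ[ℂ] b) ∈ D.relB →
        ε (∑ j, (D.s (ψ (vv j))).L (uu j)) = ψ (a * b) := by
    intro ε hε ψ hψ a b n uu vv hrep
    rw [map_sum]
    calc ∑ j, ε ((D.s (ψ (vv j))).L (uu j))
        = ∑ j, ψ ((D.t (ε (uu j))).L (vv j)) := by
          refine Finset.sum_congr rfl fun j _ => ?_
          rw [hε.1, hψ]
      _ = ψ (∑ j, (D.t (ε (uu j))).L (vv j)) := (map_sum ψ _ _).symm
      _ = ψ (a * b) := by rw [hε.2.2.1 a b n uu vv hrep]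
  -- On right-full elements, any counit takes the value φ (a * b).
  have keyR : ∀ (ε : A →ₗ[ℂ] B), IsLeftCounit D Tl Tr ε →
      ∀ (φ : A →ₗ[ℂ] B), (∀ (x : B) (a : A), φ ((D.s x).L a) = x * φ a) →
      ∀ (a b : A) (n : ℕ) (uu vv : Fin n → A),
        (∑ j, uu j ⊗ₜ[ℂ] vv j) - Tl (a ⊗ₜ[ℂ] b) ∈ D.relB →
        ε (∑ j, (D.t (φ (uu j))).L (vv j)) = φ (a * b) := by
    intro ε hε φ hφ a b n uu vv hrep
    rw [map_sum]
    calc ∑ j, ε ((D.t (φ (uu j))).L (vv j))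
        = ∑ j, φ ((D.s (ε (vv j))).L (uu j)) := by
          refine Finset.sum_congr rfl fun j _ => ?_
          rw [hε.2.1, hφ]
      _ = φ (∑ j, (D.s (ε (vv j))).L (uu j)) := (map_sum φ _ _).symm
      _ = φ (a * b) := by rw [hε.2.2.2 a b n uu vv hrep]
  -- ε₁ and ε₂ agree on the relevant spanning set.
  have hgen : ∀ z : A,
      (z ∈ leftFullSet D Tr ∧ Submodule.span ℂ (leftFullSet D Tr) = ⊤) ∨
      (z ∈ rightFullSet D Tl ∧ Submodule.span ℂ (rightFullSet D Tl) = ⊤) →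
      ε₁ z = ε₂ z := by
    rintro z (⟨⟨ψ, hψ, a, b, n, uu, vv, hrep, rfl⟩, -⟩ |
              ⟨⟨φ, hφ, a, b, n, uu, vv, hrep, rfl⟩, -⟩)
    · rw [keyL ε₁ h₁ ψ hψ a b n uu vv hrep, keyL ε₂ h₂ ψ hψ a b n uu vv hrep]
    · rw [keyR ε₁ h₁ φ hφ a b n uu vv hrep, keyR ε₂ h₂ φ hφ a b n uu vv hrep]
  -- Conclude by linearity over the span.
  ext c
  rcases hfull with hsp | hsp
  · have hc : c ∈ Submodule.span ℂ (leftFullSet D Tr) := hsp ▸ Submodule.mem_top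
    induction hc using Submodule.span_induction with
    | mem z hz => exact hgen z (Or.inl ⟨hz, hsp⟩)
    | zero => simp
    | add x y _ _ hx hy => simp [map_add, hx, hy]
    | smul r x _ hx => simp [map_smul, hx]
  · have hc : c ∈ Submodule.span ℂ (rightFullSet D Tl) := hsp ▸ Submodule.mem_top
    induction hc using Submodule.span_induction with
    | mem z hz => exact hgen z (Or.inr ⟨hz, hsp⟩)
    | zero => simp
    | add x y _ _ hx hy => simp [map_add, hx, hy]
    | smul r x _ hx => simp [map_smul, hx]

end LeftBgd
end
end
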